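/- In the standard staircase triangulation of the prism C_d = σ × [0,1] (with facets a_1⋯a_i b_i⋯b_d, 1 ≤ i ≤ d), the facets are precisely the maximal cliques of the edge graph of the triangulation. -/
import Mathlib


/-- The facet `a_1 ⋯ a_i b_i ⋯ b_d` of the staircase triangulation of the prism, as a set of
abstract vertices: `(j, false)` stands for `a_{j+1}` and `(j, true)` for `b_{j+1}`. -/
def stairFacet (d : ℕ) (i : Fin d) : Set (Fin d × Bool) :=
  {p | (p.2 = false ∧ p.1 ≤ i) ∨ (p.2 = true ∧ i ≤ p.1)}

/-- The edge graph of the staircase triangulation of the prism: two distinct vertices are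
adjacent iff they lie in a common facet. -/
def stairGraph (d : ℕ) : SimpleGraph (Fin d × Bool) :=
  SimpleGraph.fromRel fun x y => ∃ i : Fin d, x ∈ stairFacet d i ∧ y ∈ stairFacet d i

lemma stairFacet_mem_false {d : ℕ} {j i : Fin d} (h : (j, false) ∈ stairFacet d i) : j ≤ i := by
  rcases h with ⟨_, h⟩ | ⟨h, _⟩
  · exact h
  · simp at h

lemma stairFacet_mem_true {d : ℕ} {j i : Fin d} (h : (j, true) ∈ stairFacet d i) : i ≤ j := by
  rcases h with ⟨h, _⟩ | ⟨_, h⟩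
  · simp at h
  · exact h

lemma mem_false_self {d : ℕ} (i : Fin d) : (i, false) ∈ stairFacet d i :=
  Or.inl ⟨rfl, le_refl i⟩

lemma mem_true_self {d : ℕ} (i : Fin d) : (i, true) ∈ stairFacet d i :=
  Or.inr ⟨rfl, le_refl i⟩

lemma stairGraph_adj_rel {d : ℕ} {x y : Fin d × Bool} (h : (stairGraph d).Adj x y) :
    ∃ i, x ∈ stairFacet d i ∧ y ∈ stairFacet d i := by
  rcases h with ⟨-, ⟨i, hx, hy⟩ | ⟨i, hy, hx⟩⟩ <;> exact ⟨i, hx, hy⟩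

lemma stairFacet_isClique (d : ℕ) (i : Fin d) :
    (stairGraph d).IsClique (stairFacet d i) := by
  intro x hx y hy hxy
  exact ⟨hxy, Or.inl ⟨i, hx, hy⟩⟩

/-- In the staircase triangulation of the prism `C_d = σ × [0,1]`, the facets are exactly the
maximal cliques of the edge graph of the triangulation. -/
theorem stair_facets_eq_maximal_cliques (d : ℕ) (hd : 1 ≤ d) (s : Set (Fin d × Bool)) :
    (∃ i : Fin d, s = stairFacet d i) ↔
      ((stairGraph d).IsClique s ∧
        ∀ t : Set (Fin d × Bool), (stairGraph d).IsClique t → s ⊆ t → s = t) := by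
  constructor
  · rintro ⟨i, rfl⟩
    refine ⟨stairFacet_isClique d i, fun t ht hsub => ?_⟩
    apply Set.Subset.antisymm hsub
    rintro ⟨j, b⟩ hp
    cases b with
    | false =>
      by_cases hji : (j, false) = ((i, true) : Fin d × Bool)
      · simp at hji
      have hadj := ht hp (hsub (mem_true_self i)) hji
      obtain ⟨i', h1, h2⟩ := stairGraph_adj_rel hadj
      exact Or.inl ⟨rfl, le_trans (stairFacet_mem_false h1) (stairFacet_mem_true h2)⟩
    | true =>
      by_cases hji : (j, true) = ((i, false) : Fin d × Bool)
      · simp at hji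
      have hadj := ht hp (hsub (mem_false_self i)) hji
      obtain ⟨i', h1, h2⟩ := stairGraph_adj_rel hadj
      exact Or.inr ⟨rfl, le_trans (stairFacet_mem_false h2) (stairFacet_mem_true h1)⟩
  · rintro ⟨hcl, hmax⟩
    classical
    by_cases hA : ∃ j : Fin d, (j, false) ∈ s
    · -- take i = maximal a-index in s
      set A : Finset (Fin d) := Finset.univ.filter (fun j => (j, false) ∈ s) with hAdef
      have hAne : A.Nonempty := by
        obtain ⟨j, hj⟩ := hA
        exact ⟨j, by simp [hAdef, hj]⟩
      set i := A.max' hAne with hi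
      have hiA : (i, false) ∈ s := by
        have := A.max'_mem hAne
        simpa [hAdef] using this
      have hsubF : s ⊆ stairFacet d i := by
        rintro ⟨k, b⟩ hk
        cases b with
        | false =>
          refine Or.inl ⟨rfl, ?_⟩
          exact A.le_max' k (by simp [hAdef, hk])
        | true =>
          refine Or.inr ⟨rfl, ?_⟩
          by_cases hik : (i, false) = ((k, true) : Fin d × Bool)
          · simp at hik
          have hadj := hcl hiA hk hik
          obtain ⟨i', h1, h2⟩ := stairGraph_adj_rel hadj
          exact le_trans (stairFacet_mem_false h1) (stairFacet_mem_true h2)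
      exact ⟨i, hmax _ (stairFacet_isClique d i) hsubF⟩
    · push_neg at hA
      refine ⟨⟨0, hd⟩, hmax _ (stairFacet_isClique d _) ?_⟩
      rintro ⟨k, b⟩ hk
      cases b with
      | false => exact absurd hk (hA k)
      | true => exact Or.inr ⟨rfl, Fin.mk_le_of_le_val (Nat.zero_le _)⟩
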